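/- The second Lie derivative of the biomass output contains the parameter c through the term ∂(L_f² h₁)/∂c = −μ_max²·s²·(x_crit − x)·b²/(x_crit²·(K_s+s)²), which is strictly negative whenever b > 0, s > 0, and 0 ≤ x < x_crit. -/

import Mathlib

/-- The second Lie derivative of the biomass output h₁ = b along the drift of
the bioreactor depends on the parameter c through
∂(L_f² h₁)/∂c = −μ_max²·s²·(x_crit − x)·b²/(x_crit²·(K_s+s)²), which is
strictly negative whenever b > 0, s > 0, 0 ≤ x < x_crit.
Here L_f² h₁ = (μ − D)(μb − Db) + b·(∂μ/∂s · ṡ + ∂μ/∂x · ẋ), with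
∂μ/∂s = μ_max K_s/(K_s+s)²·(1 − x/x_crit), ∂μ/∂x = −μ_max s/((K_s+s)x_crit),
ṡ = −(1/Y)μb + D(s_in − s) and ẋ = cμb − Dx. -/
theorem lie2_partial_c (μmax Ks xcrit Y D sin b s x : ℝ)
    (hμmax : 0 < μmax) (hKs : 0 < Ks) (hxcrit : 0 < xcrit)
    (hY : 0 < Y) (hD : 0 < D) (hsin : 0 < sin) :
    (∀ c : ℝ, HasDerivAt
      (fun c' : ℝ =>
        (μmax * (s / (Ks + s)) * (1 - x / xcrit) - D) *
          (μmax * (s / (Ks + s)) * (1 - x / xcrit) * b - D * b)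
        + b * ((μmax * Ks / (Ks + s) ^ 2 * (1 - x / xcrit)) *
                (-(1 / Y) * (μmax * (s / (Ks + s)) * (1 - x / xcrit)) * b
                  + D * (sin - s))
             + (-(μmax * s) / ((Ks + s) * xcrit)) *
                (c' * (μmax * (s / (Ks + s)) * (1 - x / xcrit)) * b - D * x)))
      (-(μmax ^ 2 * s ^ 2 * (xcrit - x) * b ^ 2)
          / (xcrit ^ 2 * (Ks + s) ^ 2)) c) ∧
    (0 < b → 0 < s → 0 ≤ x → x < xcrit →
      -(μmax ^ 2 * s ^ 2 * (xcrit - x) * b ^ 2)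
          / (xcrit ^ 2 * (Ks + s) ^ 2) < 0) := by
  constructor
  · intro c
    set K' : ℝ := b * ((-(μmax * s) / ((Ks + s) * xcrit)) *
        ((μmax * (s / (Ks + s)) * (1 - x / xcrit)) * b)) with hK'
    have hKeq : K' = -(μmax ^ 2 * s ^ 2 * (xcrit - x) * b ^ 2)
        / (xcrit ^ 2 * (Ks + s) ^ 2) := by
      by_cases h : Ks + s = 0
      · simp [hK', h]
      · rw [hK']; field_simp
    have h1 : HasDerivAt (fun c' : ℝ =>
        (μmax * (s / (Ks + s)) * (1 - x / xcrit) - D) *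
          (μmax * (s / (Ks + s)) * (1 - x / xcrit) * b - D * b)
        + b * ((μmax * Ks / (Ks + s) ^ 2 * (1 - x / xcrit)) *
                (-(1 / Y) * (μmax * (s / (Ks + s)) * (1 - x / xcrit)) * b
                  + D * (sin - s))
             + (-(μmax * s) / ((Ks + s) * xcrit)) *
                (c' * (μmax * (s / (Ks + s)) * (1 - x / xcrit)) * b - D * x)))
        K' c := by
      have h2 : HasDerivAt (fun c' : ℝ => K' * c' +
          ((μmax * (s / (Ks + s)) * (1 - x / xcrit) - D) *
            (μmax * (s / (Ks + s)) * (1 - x / xcrit) * b - D * b)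
          + b * ((μmax * Ks / (Ks + s) ^ 2 * (1 - x / xcrit)) *
                (-(1 / Y) * (μmax * (s / (Ks + s)) * (1 - x / xcrit)) * b
                  + D * (sin - s))
             + (-(μmax * s) / ((Ks + s) * xcrit)) * (- (D * x))))) K' c := by
        simpa using ((hasDerivAt_id c).const_mul K')
      convert h2 using 2 with c'
      rw [hK']; ring
    rwa [hKeq] at h1
  · intro hb hs hx hxlt
    apply div_neg_of_neg_of_pos
    · have hxx : 0 < xcrit - x := by linarith
      have : 0 < μmax ^ 2 * s ^ 2 * (xcrit - x) * b ^ 2 :=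
        mul_pos (mul_pos (mul_pos (by positivity) (by positivity)) hxx) (by positivity)
      linarith
    · positivity
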